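/- Conversely, if x* maximizes F(x) = Σ_m N_m(x)/D_m(x) over X and y*_m = √(N_m(x*))/D_m(x*), then (x*, y*) maximizes g(x, y) = Σ_m (2 y_m √(N_m(x)) − y_m² D_m(x)) over X × ℝ^M. -/

import Mathlib

theorem quadratic_transform_equiv_backward
    (n M : ℕ) (X : Set (Fin n → ℝ)) (hne : X.Nonempty)
    (N D : Fin M → (Fin n → ℝ) → ℝ)
    (hN : ∀ m, ∀ x ∈ X, 0 ≤ N m x) (hD : ∀ m, ∀ x ∈ X, 0 < D m x)
    (xstar : Fin n → ℝ) (hxstar : xstar ∈ X)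
    (hmaxF : ∀ x ∈ X, ∑ m, N m x / D m x ≤ ∑ m, N m xstar / D m xstar)
    (ystar : Fin M → ℝ)
    (hystar : ∀ m, ystar m = Real.sqrt (N m xstar) / D m xstar) :
    ∀ x ∈ X, ∀ y : Fin M → ℝ,
      ∑ m, (2 * y m * Real.sqrt (N m x) - (y m) ^ 2 * D m x) ≤
      ∑ m, (2 * ystar m * Real.sqrt (N m xstar) - (ystar m) ^ 2 * D m xstar) := by
  intro x hx y
  calc ∑ m, (2 * y m * Real.sqrt (N m x) - (y m) ^ 2 * D m x)
      ≤ ∑ m, N m x / D m x := by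
        apply Finset.sum_le_sum
        intro m _
        have hd := hD m x hx
        have hs : Real.sqrt (N m x) ^ 2 = N m x := Real.sq_sqrt (hN m x hx)
        rw [div_eq_mul_inv]
        have h1 : 0 ≤ (Real.sqrt (N m x) - y m * D m x) ^ 2 := sq_nonneg _
        have h2 : 0 < (D m x)⁻¹ := inv_pos.mpr hd
        nlinarith [mul_pos hd h2, mul_inv_cancel₀ hd.ne']
    _ ≤ ∑ m, N m xstar / D m xstar := hmaxF x hx
    _ = ∑ m, (2 * ystar m * Real.sqrt (N m xstar) - (ystar m) ^ 2 * D m xstar) := by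
        apply Finset.sum_congr rfl
        intro m _
        have hd := hD m xstar hxstar
        have hs : Real.sqrt (N m xstar) ^ 2 = N m xstar := Real.sq_sqrt (hN m xstar hxstar)
        have h2 : Real.sqrt (N m xstar) * Real.sqrt (N m xstar) = N m xstar :=
          Real.mul_self_sqrt (hN m xstar hxstar)
        rw [hystar m]
        field_simp
        linear_combination (-1 : ℝ) * h2
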